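/- Adopt the visitation setup: (Ω, ℱ, P) a probability space with filtration (ℱ_t)_{t∈ℕ}, δ ∈ (0,1], for each t a random variable q_t that is ℱ_t-measurable with δ ≤ q_t ≤ 1 almost surely, and an indicator random variable I_t ∈ {0,1} that is ℱ_{t+1}-measurable with E[I_t | ℱ_t] = q_t almost surely; set n_t = ∑_{τ<t} I_τ. Let β : ℕ → [0, ∞) satisfy ∑_{t=0}^∞ β(t) = ∞ and ∑_{t=0}^∞ β(t)² < ∞, and suppose there exists T ∈ ℕ such that β is nonincreasing on {t : t > T}. Then, almost surely, ∑_{t=0}^∞ q_t β(n_t) = ∞ and ∑_{t=0}^∞ q_t² β(n_t)² < ∞. -/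

import Mathlib

open MeasureTheory Filter Topology
open scoped NNReal ENNReal

/-- Discrete intermediate value: a `ℕ`-valued sequence starting at `0` with unit steps
attains every value it eventually exceeds. -/
private lemma nat_reach {f : ℕ → ℕ} (h0 : f 0 = 0) (hstep : ∀ t, f (t + 1) ≤ f t + 1)
    {k : ℕ} (h : ∃ t, k ≤ f t) : ∃ t, f t = k := by
  classical
  have hk : k ≤ f (Nat.find h) := Nat.find_spec h
  rcases eq_or_lt_of_le hk with heq | hlt
  · exact ⟨Nat.find h, heq.symm⟩
  · exfalso
    have hpos : Nat.find h ≠ 0 := by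
      intro h0'
      rw [h0', h0] at hlt; omega
    obtain ⟨s, hs⟩ : ∃ s, Nat.find h = s + 1 := ⟨Nat.find h - 1, by omega⟩
    have h1 : f (s + 1) ≤ f s + 1 := hstep s
    have h2 : ¬ k ≤ f s := Nat.find_min h (by omega)
    rw [hs] at hlt
    omega

/-- Effective step sizes: with visit indicators `I t` whose conditional probabilities
`q t ∈ [δ, 1]`, visit counters `n_t = ∑_{τ<t} I_τ`, and a step-size schedule `β` with
divergent sum, square-summable and eventually nonincreasing, almost surely
`∑_t q_t β(n_t) = ∞` and `∑_t q_t² β(n_t)² < ∞`. -/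
theorem effective_step_sizes
    {Ω : Type*} {m : MeasurableSpace Ω} {P : Measure Ω} [IsProbabilityMeasure P]
    (ℱ : Filtration ℕ m) (δ : ℝ) (hδ : δ ∈ Set.Ioc (0 : ℝ) 1)
    (q : ℕ → Ω → ℝ)
    (hq_meas : ∀ t, StronglyMeasurable[ℱ t] (q t))
    (hq_bdd : ∀ t, ∀ᵐ ω ∂P, δ ≤ q t ω ∧ q t ω ≤ 1)
    (I : ℕ → Ω → ℝ)
    (hI01 : ∀ t ω, I t ω = 0 ∨ I t ω = 1)
    (hI_meas : ∀ t, StronglyMeasurable[ℱ (t + 1)] (I t))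
    (hIq : ∀ t, P[I t | ℱ t] =ᵐ[P] q t)
    (n : ℕ → Ω → ℕ)
    (hn : ∀ t ω, (n t ω : ℝ) = ∑ τ ∈ Finset.range t, I τ ω)
    (β : ℕ → ℝ) (hβ_nonneg : ∀ t, 0 ≤ β t)
    (hβ_div : ¬ Summable β)
    (hβ_sq : Summable (fun t => (β t) ^ 2))
    (T : ℕ) (hβ_mono : ∀ s t : ℕ, T < s → s ≤ t → β t ≤ β s) :
    ∀ᵐ ω ∂P, ¬ Summable (fun t => q t ω * β (n t ω)) ∧
      Summable (fun t => (q t ω) ^ 2 * (β (n t ω)) ^ 2) := by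
  classical
  have hδ0 : (0 : ℝ) < δ := hδ.1
  -- basic facts about `n`
  have hn0 : ∀ ω, n 0 ω = 0 := by
    intro ω
    have := hn 0 ω
    simp only [Finset.range_zero, Finset.sum_empty, Nat.cast_eq_zero] at this
    exact this
  have hsucc : ∀ t ω, (n (t + 1) ω : ℝ) = (n t ω : ℝ) + I t ω := by
    intro t ω
    rw [hn, hn, Finset.sum_range_succ]
  have hstep0 : ∀ t ω, I t ω = 0 → n (t + 1) ω = n t ω := by
    intro t ω h
    have := hsucc t ω
    rw [h, add_zero] at this
    exact_mod_cast this
  have hstep1 : ∀ t ω, I t ω = 1 → n (t + 1) ω = n t ω + 1 := by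
    intro t ω h
    have := hsucc t ω
    rw [h] at this
    exact_mod_cast this
  have hstep : ∀ t ω, n (t + 1) ω = n t ω ∨ n (t + 1) ω = n t ω + 1 := by
    intro t ω
    rcases hI01 t ω with h | h
    · exact Or.inl (hstep0 t ω h)
    · exact Or.inr (hstep1 t ω h)
  -- key deterministic identity
  have hsum_id : ∀ ω N, ∑ t ∈ Finset.range N, I t ω * β (n t ω) ^ 2
      = ∑ k ∈ Finset.range (n N ω), β k ^ 2 := by
    intro ω N
    induction N with
    | zero => simp [hn0 ω]
    | succ N ih =>
      rw [Finset.sum_range_succ, ih]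
      rcases hI01 N ω with h | h
      · rw [h, hstep0 N ω h, zero_mul, add_zero]
      · rw [h, hstep1 N ω h, Finset.sum_range_succ, one_mul]
  set C : ℝ := ∑' k, β k ^ 2 with hC_def
  have hC0 : 0 ≤ C := tsum_nonneg fun _ => sq_nonneg _
  have hCk : ∀ k, β k ^ 2 ≤ C := fun k => Summable.le_tsum hβ_sq k fun j _ => sq_nonneg _
  have hpartial : ∀ ω N, ∑ k ∈ Finset.range (n N ω), β k ^ 2 ≤ C := fun ω N =>
    Summable.sum_le_tsum _ (fun k _ => sq_nonneg _) hβ_sq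
  -- measurability of `n t` and related functions
  have hn_meas : ∀ t, Measurable[ℱ t] (n t) := by
    intro t
    refine @measurable_to_countable' ℕ Ω _ _ (ℱ t) _ fun k => ?_
    have hsm : Measurable[ℱ t] fun ω => ∑ τ ∈ Finset.range t, I τ ω := by
      apply Finset.measurable_sum
      intro τ hτ
      have h1 : ℱ (τ + 1) ≤ ℱ t := ℱ.mono (Finset.mem_range.1 hτ)
      exact ((hI_meas τ).mono h1).measurable
    have heq : (n t) ⁻¹' {k} = (fun ω => ∑ τ ∈ Finset.range t, I τ ω) ⁻¹' {(k : ℝ)} := by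
      ext ω
      simp only [Set.mem_preimage, Set.mem_singleton_iff, ← hn t ω, Nat.cast_inj]
    rw [heq]
    exact hsm (measurableSet_singleton _)
  have hn_meas' : ∀ t, Measurable (n t) := fun t => (hn_meas t).mono (ℱ.le t) le_rfl
  have hβn_meas : ∀ t, StronglyMeasurable[ℱ t] (fun ω => β (n t ω) ^ 2) := fun t =>
    ((measurable_from_top (f := fun k : ℕ => β k ^ 2)).comp (hn_meas t)).stronglyMeasurable
  have hβn_meas' : ∀ t, Measurable (fun ω => β (n t ω) ^ 2) := fun t =>
    (measurable_from_top (f := fun k : ℕ => β k ^ 2)).comp (hn_meas' t)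
  have hq_meas' : ∀ t, Measurable (q t) := fun t =>
    ((hq_meas t).measurable).mono (ℱ.le t) le_rfl
  -- integrability
  have hI_int : ∀ t, Integrable (I t) P := by
    intro t
    refine (integrable_const (1 : ℝ)).mono'
      (((hI_meas t).mono (ℱ.le (t + 1))).aestronglyMeasurable) ?_
    filter_upwards with ω
    rcases hI01 t ω with h | h <;> simp [h]
  have hf_int : ∀ t, Integrable (fun ω => β (n t ω) ^ 2) P := by
    intro t
    refine (integrable_const C).mono' (hβn_meas' t).aestronglyMeasurable ?_
    filter_upwards with ω
    rw [Real.norm_eq_abs, abs_of_nonneg (sq_nonneg _)]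
    exact hCk _
  have hIf_int : ∀ t, Integrable ((fun ω => β (n t ω) ^ 2) * I t) P := by
    intro t
    refine (integrable_const C).mono'
      (((hβn_meas' t).mul (((hI_meas t).measurable).mono (ℱ.le (t + 1)) le_rfl)).aestronglyMeasurable.congr ?_) ?_
    · filter_upwards with ω
      simp [mul_comm]
    · filter_upwards with ω
      rcases hI01 t ω with h | h
      · simp [Pi.mul_apply, h, hC0]
      · simp only [Pi.mul_apply, h, mul_one, Real.norm_eq_abs]
        rw [abs_of_nonneg (sq_nonneg (β (n t ω)))]
        exact hCk _
  have hqf_int : ∀ t, Integrable (fun ω => q t ω * β (n t ω) ^ 2) P := by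
    intro t
    refine (integrable_const C).mono'
      ((hq_meas' t).mul (hβn_meas' t)).aestronglyMeasurable ?_
    filter_upwards [hq_bdd t] with ω hω
    rw [Real.norm_eq_abs, abs_mul]
    have h1 : |q t ω| ≤ 1 := abs_le.2 ⟨by linarith, hω.2⟩
    have h2 : |β (n t ω) ^ 2| ≤ C := by
      rw [abs_of_nonneg (sq_nonneg _)]; exact hCk _
    calc |q t ω| * |β (n t ω) ^ 2| ≤ 1 * C := by
          exact mul_le_mul h1 h2 (abs_nonneg _) zero_le_one
      _ = C := one_mul C
  -- key integral identity: ∫ q_t β(n_t)² = ∫ I_t β(n_t)²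
  have key : ∀ t, ∫ ω, q t ω * β (n t ω) ^ 2 ∂P = ∫ ω, I t ω * β (n t ω) ^ 2 ∂P := by
    intro t
    have hpull : P[(fun ω => β (n t ω) ^ 2) * I t | ℱ t]
        =ᵐ[P] (fun ω => β (n t ω) ^ 2) * P[I t | ℱ t] :=
      condExp_mul_of_stronglyMeasurable_left (hβn_meas t) (hIf_int t) (hI_int t)
    have h1 : (fun ω => q t ω * β (n t ω) ^ 2)
        =ᵐ[P] fun ω => (P[(fun ω => β (n t ω) ^ 2) * I t | ℱ t]) ω := by
      filter_upwards [hIq t, hpull] with ω h h'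
      rw [h', Pi.mul_apply, h, mul_comm]
    rw [integral_congr_ae h1, integral_condExp (ℱ.le t)]
    apply integral_congr_ae
    filter_upwards with ω
    simp [mul_comm]
  set a : ℕ → ℝ := fun t => ∫ ω, q t ω * β (n t ω) ^ 2 ∂P with ha_def
  have key' : ∀ t, a t = ∫ ω, I t ω * β (n t ω) ^ 2 ∂P := fun t => key t
  have hint' : ∀ t, Integrable (fun ω => I t ω * β (n t ω) ^ 2) P := fun t =>
    (hIf_int t).congr (by filter_upwards with ω; simp [mul_comm])
  have ha_nonneg : ∀ t, 0 ≤ a t := by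
    intro t
    rw [key' t]
    apply integral_nonneg
    intro ω
    rcases hI01 t ω with h | h <;> simp [h, sq_nonneg]
  have ha_partial : ∀ N, ∑ t ∈ Finset.range N, a t ≤ C := by
    intro N
    calc ∑ t ∈ Finset.range N, a t
        = ∑ t ∈ Finset.range N, ∫ ω, I t ω * β (n t ω) ^ 2 ∂P :=
          Finset.sum_congr rfl fun t _ => key' t
      _ = ∫ ω, ∑ t ∈ Finset.range N, I t ω * β (n t ω) ^ 2 ∂P :=
          (integral_finset_sum _ fun t _ => hint' t).symm
      _ ≤ ∫ _ω, C ∂P := by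
          apply integral_mono (integrable_finset_sum _ fun t _ => hint' t) (integrable_const C)
          intro ω
          show (∑ t ∈ Finset.range N, I t ω * β (n t ω) ^ 2) ≤ C
          rw [hsum_id ω N]
          exact hpartial ω N
      _ = C := by simp
  have ha_summ : Summable a := summable_of_sum_range_le ha_nonneg ha_partial
  -- lintegral bound gives a.e. summability of q_t β(n_t)²
  have hg_meas : ∀ t, Measurable fun ω => ENNReal.ofReal (q t ω * β (n t ω) ^ 2) := fun t =>
    ENNReal.measurable_ofReal.comp ((hq_meas' t).mul (hβn_meas' t))
  have hq_nonneg_ae : ∀ t, 0 ≤ᵐ[P] fun ω => q t ω * β (n t ω) ^ 2 := by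
    intro t
    filter_upwards [hq_bdd t] with ω hω
    exact mul_nonneg (le_trans hδ0.le hω.1) (sq_nonneg _)
  have hlint : ∫⁻ ω, ∑' t, ENNReal.ofReal (q t ω * β (n t ω) ^ 2) ∂P ≠ ⊤ := by
    rw [lintegral_tsum fun t => (hg_meas t).aemeasurable]
    have h1 : ∀ t, ∫⁻ ω, ENNReal.ofReal (q t ω * β (n t ω) ^ 2) ∂P = ENNReal.ofReal (a t) :=
      fun t => (ofReal_integral_eq_lintegral_ofReal (hqf_int t) (hq_nonneg_ae t)).symm
    simp_rw [h1]
    rw [← ENNReal.ofReal_tsum_of_nonneg ha_nonneg ha_summ]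
    exact ENNReal.ofReal_ne_top
  have hae_sq : ∀ᵐ ω ∂P, ∑' t, ENNReal.ofReal (q t ω * β (n t ω) ^ 2) < ⊤ :=
    ae_lt_top (Measurable.ennreal_tsum hg_meas) hlint
  -- a.e. divergence of visit counts
  set f : ℕ → Ω → ℝ := fun t ω => ∑ τ ∈ Finset.range t, I τ ω with hf_def
  have hf_adapted : StronglyAdapted ℱ f := by
    intro t
    apply Measurable.stronglyMeasurable
    apply Finset.measurable_sum
    intro τ hτ
    exact ((hI_meas τ).mono (ℱ.mono (Finset.mem_range.1 hτ))).measurable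
  have hf_int' : ∀ t, Integrable (f t) P := by
    intro t
    apply integrable_finset_sum
    intro τ _
    exact hI_int τ
  have hf_mono : ∀ᵐ ω ∂P, ∀ t, f t ω ≤ f (t + 1) ω := by
    filter_upwards with ω t
    rw [hf_def]
    simp only [Finset.sum_range_succ]
    rcases hI01 t ω with h | h <;> simp [h]
  have hf_bdd : ∀ᵐ ω ∂P, ∀ t, |f (t + 1) ω - f t ω| ≤ ((1 : ℝ≥0) : ℝ) := by
    filter_upwards with ω t
    rw [hf_def]
    simp only [Finset.sum_range_succ, add_sub_cancel_left]
    rcases hI01 t ω with h | h <;> simp [h]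
  have hBC := tendsto_sum_indicator_atTop_iff hf_mono hf_adapted hf_int' hf_bdd
  have hcond : ∀ᵐ ω ∂P, ∀ k, (P[f (k + 1) - f k | ℱ k]) ω = q k ω := by
    rw [ae_all_iff]
    intro k
    have hfeq : f (k + 1) - f k = I k := by
      funext ω
      simp [hf_def, Finset.sum_range_succ]
    rw [hfeq]
    exact hIq k
  have hq_bdd' : ∀ᵐ ω ∂P, ∀ t, δ ≤ q t ω ∧ q t ω ≤ 1 := ae_all_iff.2 hq_bdd
  have hntop : ∀ᵐ ω ∂P, Tendsto (fun t => n t ω) atTop atTop := by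
    filter_upwards [hBC, hcond, hq_bdd'] with ω hω₁ hω₂ hω₃
    have hpred : Tendsto (fun t => predictablePart f ℱ P t ω) atTop atTop := by
      have hple : ∀ t : ℕ, (t : ℝ) * δ ≤ predictablePart f ℱ P t ω := by
        intro t
        have : predictablePart f ℱ P t ω = ∑ k ∈ Finset.range t, q k ω := by
          rw [predictablePart, Finset.sum_apply]
          exact Finset.sum_congr rfl fun k _ => hω₂ k
        rw [this]
        calc (t : ℝ) * δ = ∑ _k ∈ Finset.range t, δ := by
              rw [Finset.sum_const, Finset.card_range, nsmul_eq_mul]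
          _ ≤ ∑ k ∈ Finset.range t, q k ω := Finset.sum_le_sum fun k _ => (hω₃ k).1
      exact tendsto_atTop_mono hple
        ((tendsto_natCast_atTop_atTop).atTop_mul_const hδ0)
    have hftop : Tendsto (fun t => f t ω) atTop atTop := hω₁.2 hpred
    have : Tendsto (fun t => ((n t ω : ℝ))) atTop atTop := by
      have heq : (fun t => ((n t ω : ℝ))) = fun t => f t ω := by
        funext t
        exact hn t ω
      rw [heq]
      exact hftop
    exact_mod_cast tendsto_natCast_atTop_iff.mp this
  -- conclusion
  filter_upwards [hae_sq, hq_bdd', hntop] with ω hω₁ hω₂ hω₃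
  have hterm_nonneg : ∀ t, 0 ≤ q t ω * β (n t ω) ^ 2 := fun t =>
    mul_nonneg (le_trans hδ0.le (hω₂ t).1) (sq_nonneg _)
  have hsumm : Summable fun t => q t ω * β (n t ω) ^ 2 := by
    have h1 := ENNReal.summable_toReal hω₁.ne
    exact h1.congr fun t => by rw [ENNReal.toReal_ofReal (hterm_nonneg t)]
  constructor
  · -- divergence
    intro hcontra
    have hβn_summ : Summable fun t => β (n t ω) := by
      have h1 : Summable fun t => δ * β (n t ω) := by
        refine Summable.of_nonneg_of_le (fun t => mul_nonneg hδ0.le (hβ_nonneg _))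
          (fun t => mul_le_mul_of_nonneg_right (hω₂ t).1 (hβ_nonneg _)) hcontra
      have h2 := h1.mul_left δ⁻¹
      simpa [← mul_assoc, inv_mul_cancel₀ hδ0.ne'] using h2
    apply hβ_div
    apply summable_of_sum_range_le (c := ∑' t, β (n t ω)) hβ_nonneg
    intro K
    have hreach : ∀ k, ∃ t, n t ω = k := by
      intro k
      refine nat_reach (hn0 ω) (fun t => ?_) ?_
      · rcases hstep t ω with h | h <;> omega
      · exact (hω₃.eventually_ge_atTop k).exists
    choose tk htk using hreach
    calc ∑ k ∈ Finset.range K, β k = ∑ k ∈ Finset.range K, β (n (tk k) ω) := by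
          exact Finset.sum_congr rfl fun k _ => by rw [htk k]
      _ = ∑ t ∈ (Finset.range K).image tk, β (n t ω) :=
          (Finset.sum_image (f := fun t => β (n t ω)) (g := tk)
            fun x _ y _ h => by rw [← htk x, ← htk y, h]).symm
      _ ≤ ∑' t, β (n t ω) := Summable.sum_le_tsum _ (fun _ _ => hβ_nonneg _) hβn_summ
  · -- square summability
    refine Summable.of_nonneg_of_le (fun t => mul_nonneg (sq_nonneg _) (sq_nonneg _))
      (fun t => ?_) hsumm
    have h1 : q t ω ^ 2 ≤ q t ω := by nlinarith [(hω₂ t).1, (hω₂ t).2]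
    exact mul_le_mul_of_nonneg_right h1 (sq_nonneg _)
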